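/- Let ρ ∈ M_n(ℂ) satisfy ρ = ρ*, ρ² = ρ and Tr(ρ) = 1, let H ∈ M_n(ℂ) be Hermitian and let L_1,…,L_m ∈ M_n(ℂ). Define B_j(ρ) = L_jρ + ρL_j* − Tr((L_j+L_j*)ρ)·ρ and A(ρ) = −i[H,ρ] + Σ_{j=1}^m { Tr((L_j+L_j*)ρ)·B_j(ρ) − ½[(L_j+L_j*)L_jρ − Tr((L_j+L_j*)L_jρ)·ρ] − ½[ρL_j*(L_j+L_j*) − Tr((L_j+L_j*)ρL_j*)·ρ] }. Then A(ρ) is Hermitian and satisfies ρA(ρ) + A(ρ)ρ = A(ρ); in particular Tr(A(ρ)) = 0. -/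

import Mathlib

open Matrix

/-- The diffusion vector field `B_j(ρ) = L_jρ + ρL_j* − Tr((L_j+L_j*)ρ)ρ` of eq. (4.3). -/
noncomputable def diffusionField {n : ℕ} (L ρ : Matrix (Fin n) (Fin n) ℂ) :
    Matrix (Fin n) (Fin n) ℂ :=
  L * ρ + ρ * Lᴴ - ((L + Lᴴ) * ρ).trace • ρ

/-- The Stratonovich drift vector field `A(ρ)` of eq. (4.2). -/
noncomputable def driftField {n m : ℕ} (H : Matrix (Fin n) (Fin n) ℂ)
    (L : Fin m → Matrix (Fin n) (Fin n) ℂ) (ρ : Matrix (Fin n) (Fin n) ℂ) :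
    Matrix (Fin n) (Fin n) ℂ :=
  (-Complex.I) • (H * ρ - ρ * H) +
    ∑ j, (((L j + (L j)ᴴ) * ρ).trace • diffusionField (L j) ρ
      - (2⁻¹ : ℂ) • ((L j + (L j)ᴴ) * L j * ρ - ((L j + (L j)ᴴ) * L j * ρ).trace • ρ)
      - (2⁻¹ : ℂ) • (ρ * (L j)ᴴ * (L j + (L j)ᴴ)
          - ((L j + (L j)ᴴ) * ρ * (L j)ᴴ).trace • ρ))


lemma trace_aha_zero {n : ℕ} (A : Matrix (Fin n) (Fin n) ℂ)
    (ht : (Aᴴ * A).trace = 0) : A = 0 := by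
  have key : ∑ i : Fin n, ∑ j : Fin n, Complex.normSq (A j i) = 0 := by
    have : (Aᴴ * A).trace = ((∑ i : Fin n, ∑ j : Fin n, Complex.normSq (A j i) : ℝ) : ℂ) := by
      simp only [Matrix.trace, Matrix.diag, Matrix.mul_apply, conjTranspose_apply]
      push_cast
      refine Finset.sum_congr rfl fun i _ => Finset.sum_congr rfl fun j _ => ?_
      rw [Complex.star_def, ← Complex.normSq_eq_conj_mul_self]
    rw [this] at ht
    exact_mod_cast ht
  ext i j
  have h1 : ∀ i ∈ Finset.univ, (0:ℝ) ≤ ∑ j : Fin n, Complex.normSq (A j i) :=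
    fun i _ => Finset.sum_nonneg fun j _ => Complex.normSq_nonneg _
  have h2 := (Finset.sum_eq_zero_iff_of_nonneg h1).mp key j (Finset.mem_univ _)
  have h3 := (Finset.sum_eq_zero_iff_of_nonneg
    (fun j _ => Complex.normSq_nonneg (A j _))).mp h2 i (Finset.mem_univ _)
  simpa using Complex.normSq_eq_zero.mp h3


lemma EYE {n : ℕ} (k : Fin n) (Y : Matrix (Fin n) (Fin n) ℂ) :
    single k k (1:ℂ) * Y * single k k (1:ℂ)
      = Y k k • single k k (1:ℂ) := by
  ext i j
  rcases eq_or_ne i k with hi | hi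
  · rcases eq_or_ne j k with hj | hj
    · subst hi; subst hj
      rw [Matrix.smul_apply, single_apply_same, smul_eq_mul, mul_one,
        mul_single_apply_same, single_mul_apply_same,
        one_mul, mul_one]
    · simp only [mul_single_apply_of_ne _ _ _ _ _ hj, Matrix.smul_apply]
      rw [single_apply_of_ne _ _ _ _ _ (by tauto), smul_zero]
  · rw [mul_assoc]
    simp only [single_mul_apply_of_ne _ _ _ _ _ hi, Matrix.smul_apply]
    rw [single_apply_of_ne _ _ _ _ _ (by tauto), smul_zero]

lemma E_herm {n : ℕ} (k : Fin n) :
    (single k k (1:ℂ))ᴴ = single k k (1:ℂ) := by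
  ext i j
  simp only [conjTranspose_apply, Matrix.single, Matrix.of_apply]
  by_cases hi : i = k <;> by_cases hj : j = k <;> simp [hi, hj, and_comm]

lemma pure_key {n : ℕ} (ρ : Matrix (Fin n) (Fin n) ℂ)
    (h1 : ρᴴ = ρ) (h2 : ρ * ρ = ρ) (h3 : ρ.trace = 1)
    (X : Matrix (Fin n) (Fin n) ℂ) : ρ * X * ρ = (X * ρ).trace • ρ := by
  obtain ⟨k, -, hk⟩ : ∃ k ∈ Finset.univ, ρ k k ≠ 0 := by
    apply Finset.exists_ne_zero_of_sum_ne_zero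
    show ρ.trace ≠ 0
    rw [h3]; exact one_ne_zero
  set c : ℂ := ρ k k with hc
  set E : Matrix (Fin n) (Fin n) ℂ := single k k (1:ℂ) with hE
  set W : Matrix (Fin n) (Fin n) ℂ := ρ * E * ρ with hW
  have hcstar : star c = c := by
    have := congrFun (congrFun h1 k) k
    simpa [conjTranspose_apply] using this
  have htrρE : (ρ * E).trace = c := by
    rw [Matrix.trace, Finset.sum_eq_single k]
    · simp [hE, hc]
    · intro b _ hb
      simp [Matrix.diag_apply, hE, hb]
    · intro h; exact absurd (Finset.mem_univ k) h
  have htrW : W.trace = c := by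
    rw [hW, trace_mul_cycle, h2, htrρE]
  have hρW : ρ * W = W := by rw [hW, ← mul_assoc, ← mul_assoc, h2]
  have hWρ : W * ρ = W := by rw [hW, mul_assoc, mul_assoc, h2, ← mul_assoc]
  have hWW : W * W = c • W := by
    have h' : W * W = ρ * (E * (ρ * ρ) * E) * ρ := by
      rw [hW]; noncomm_ring
    rw [h', h2, EYE, ← hc, ← hE, Matrix.mul_smul, Matrix.smul_mul, hW]
  have hWherm : Wᴴ = W := by
    rw [hW, conjTranspose_mul, conjTranspose_mul, h1, E_herm, ← hE, mul_assoc]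
  set P : Matrix (Fin n) (Fin n) ℂ := ρ - c⁻¹ • W with hP
  have hPherm : Pᴴ = P := by
    rw [hP, conjTranspose_sub, conjTranspose_smul, h1, hWherm, star_inv₀, hcstar]
  have hPP : P * P = P := by
    rw [hP, Matrix.sub_mul, Matrix.mul_sub, Matrix.mul_sub, h2, Matrix.mul_smul, hρW,
      Matrix.smul_mul, hWρ, Matrix.smul_mul, Matrix.mul_smul, hWW]
    rw [smul_smul, smul_smul, inv_mul_cancel_right₀ hk]
    abel
  have hPtr : P.trace = 0 := by
    rw [hP, trace_sub, trace_smul, htrW, h3, smul_eq_mul, inv_mul_cancel₀ hk, sub_self]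
  have hP0 : P = 0 := by
    apply trace_aha_zero
    rw [hPherm, hPP, hPtr]
  have hρc : ρ = c⁻¹ • W := by
    have h' := sub_eq_zero.mp hP0
    linear_combination (norm := module) h'
  have hρ : W = c • ρ := by
    rw [hρc, smul_smul, mul_inv_cancel₀ hk, one_smul]
  have main : ρ * X * ρ = (c⁻¹ * (ρ * X * ρ) k k) • ρ := by
    have expand : ρ * X * ρ = (c⁻¹ * c⁻¹) • (ρ * (E * (ρ * X * ρ) * E) * ρ) := by
      conv_lhs => rw [hρc]
      rw [hW, Matrix.smul_mul, Matrix.smul_mul, Matrix.mul_smul, smul_smul]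
      congr 1
      noncomm_ring
    rw [expand, EYE, ← hE, Matrix.mul_smul, Matrix.smul_mul, ← hW, hρ, smul_smul, smul_smul]
    congr 1
    rw [Matrix.smul_apply, smul_eq_mul, ← hc]
    field_simp
  have t1 : (ρ * X * ρ).trace = (X * ρ).trace := by
    rw [trace_mul_cycle, h2, trace_mul_comm]
  have t2 : (X * ρ).trace = c⁻¹ * (ρ * X * ρ) k k := by
    rw [← t1]
    conv_lhs => rw [main]
    rw [trace_smul, h3, smul_eq_mul, mul_one]
  rw [main, t2]

section Tangent

variable {n : ℕ} (ρ : Matrix (Fin n) (Fin n) ℂ)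

/-- Tangency predicate: `ρX + Xρ = X`. -/
def Tang (X : Matrix (Fin n) (Fin n) ℂ) : Prop := ρ * X + X * ρ = X

variable {ρ}

lemma tang_smul (c : ℂ) {X : Matrix (Fin n) (Fin n) ℂ} (h : Tang ρ X) : Tang ρ (c • X) := by
  unfold Tang at *
  rw [Matrix.mul_smul, Matrix.smul_mul, ← smul_add, h]

lemma tang_sub {X Y : Matrix (Fin n) (Fin n) ℂ} (hX : Tang ρ X) (hY : Tang ρ Y) :
    Tang ρ (X - Y) := by
  unfold Tang at *
  rw [Matrix.mul_sub, Matrix.sub_mul, sub_add_sub_comm, hX, hY]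

lemma tang_add {X Y : Matrix (Fin n) (Fin n) ℂ} (hX : Tang ρ X) (hY : Tang ρ Y) :
    Tang ρ (X + Y) := by
  unfold Tang at *
  rw [Matrix.mul_add, Matrix.add_mul, add_add_add_comm, hX, hY]

lemma tang_sum {m : ℕ} {f : Fin m → Matrix (Fin n) (Fin n) ℂ}
    (h : ∀ j, Tang ρ (f j)) : Tang ρ (∑ j, f j) := by
  unfold Tang at *
  rw [Matrix.mul_sum, Matrix.sum_mul, ← Finset.sum_add_distrib]
  exact Finset.sum_congr rfl fun j _ => h j

variable (hm : ρ * ρ = ρ)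
include hm

lemma tang_comm (Y : Matrix (Fin n) (Fin n) ℂ) : Tang ρ (Y * ρ - ρ * Y) := by
  unfold Tang
  rw [Matrix.mul_sub, Matrix.sub_mul, ← Matrix.mul_assoc ρ Y ρ, Matrix.mul_assoc Y ρ ρ, hm,
    ← Matrix.mul_assoc ρ ρ Y, hm]
  abel

variable (h1 : ρᴴ = ρ) (h3 : ρ.trace = 1)
include h1 h3

lemma tang_left (Y : Matrix (Fin n) (Fin n) ℂ) :
    Tang ρ (Y * ρ - (Y * ρ).trace • ρ) := by
  have key := pure_key ρ h1 hm h3 Y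
  unfold Tang
  rw [Matrix.mul_sub, Matrix.sub_mul, Matrix.mul_smul, Matrix.smul_mul, hm,
    ← Matrix.mul_assoc ρ Y ρ, key, Matrix.mul_assoc Y ρ ρ, hm]
  abel

lemma tang_right (Y : Matrix (Fin n) (Fin n) ℂ) :
    Tang ρ (ρ * Y - (Y * ρ).trace • ρ) := by
  have key := pure_key ρ h1 hm h3 Y
  unfold Tang
  rw [Matrix.mul_sub, Matrix.sub_mul, Matrix.mul_smul, Matrix.smul_mul, hm,
    ← Matrix.mul_assoc ρ ρ Y, hm, key]
  abel

end Tangent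

section Herm

variable {n : ℕ} (ρ L : Matrix (Fin n) (Fin n) ℂ) (h1 : ρᴴ = ρ)
include h1

lemma star_trace_c : star (((L + Lᴴ) * ρ).trace) = ((L + Lᴴ) * ρ).trace := by
  rw [← trace_conjTranspose, conjTranspose_mul, h1, conjTranspose_add,
    conjTranspose_conjTranspose, add_comm Lᴴ L, trace_mul_comm]

lemma star_trace_t1 : star (((L + Lᴴ) * L * ρ).trace) = ((L + Lᴴ) * ρ * Lᴴ).trace := by
  rw [← trace_conjTranspose, conjTranspose_mul, conjTranspose_mul, h1, conjTranspose_add,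
    conjTranspose_conjTranspose, add_comm Lᴴ L, ← Matrix.mul_assoc ρ Lᴴ (L + Lᴴ),
    trace_mul_cycle ρ Lᴴ (L + Lᴴ)]

lemma star_trace_t2 : star (((L + Lᴴ) * ρ * Lᴴ).trace) = ((L + Lᴴ) * L * ρ).trace := by
  rw [← trace_conjTranspose, conjTranspose_mul, conjTranspose_mul, h1,
    conjTranspose_conjTranspose, conjTranspose_add, conjTranspose_conjTranspose,
    add_comm Lᴴ L, ← Matrix.mul_assoc L ρ (L + Lᴴ), trace_mul_cycle L ρ (L + Lᴴ)]

lemma diffusion_herm : (diffusionField L ρ)ᴴ = diffusionField L ρ := by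
  unfold diffusionField
  rw [conjTranspose_sub, conjTranspose_add, conjTranspose_mul, conjTranspose_mul, h1,
    conjTranspose_conjTranspose, conjTranspose_smul, h1, star_trace_c ρ L h1, add_comm]

lemma summand_herm :
    (((L + Lᴴ) * ρ).trace • diffusionField L ρ
      - (2⁻¹ : ℂ) • ((L + Lᴴ) * L * ρ - ((L + Lᴴ) * L * ρ).trace • ρ)
      - (2⁻¹ : ℂ) • (ρ * Lᴴ * (L + Lᴴ) - ((L + Lᴴ) * ρ * Lᴴ).trace • ρ))ᴴ
    = ((L + Lᴴ) * ρ).trace • diffusionField L ρ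
      - (2⁻¹ : ℂ) • ((L + Lᴴ) * L * ρ - ((L + Lᴴ) * L * ρ).trace • ρ)
      - (2⁻¹ : ℂ) • (ρ * Lᴴ * (L + Lᴴ) - ((L + Lᴴ) * ρ * Lᴴ).trace • ρ) := by
  have hM : (L + Lᴴ)ᴴ = L + Lᴴ := by
    rw [conjTranspose_add, conjTranspose_conjTranspose, add_comm]
  have e2 : ((L + Lᴴ) * L * ρ - ((L + Lᴴ) * L * ρ).trace • ρ)ᴴ
      = ρ * Lᴴ * (L + Lᴴ) - ((L + Lᴴ) * ρ * Lᴴ).trace • ρ := by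
    rw [conjTranspose_sub, conjTranspose_mul, conjTranspose_mul, h1, hM,
      conjTranspose_smul, h1, star_trace_t1 ρ L h1, Matrix.mul_assoc ρ Lᴴ (L + Lᴴ)]
  have e3 : (ρ * Lᴴ * (L + Lᴴ) - ((L + Lᴴ) * ρ * Lᴴ).trace • ρ)ᴴ
      = (L + Lᴴ) * L * ρ - ((L + Lᴴ) * L * ρ).trace • ρ := by
    rw [conjTranspose_sub, conjTranspose_mul, conjTranspose_mul, h1, hM,
      conjTranspose_conjTranspose, conjTranspose_smul, h1, star_trace_t2 ρ L h1,
      ← Matrix.mul_assoc (L + Lᴴ) L ρ]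
  rw [conjTranspose_sub, conjTranspose_sub, conjTranspose_smul, conjTranspose_smul,
    conjTranspose_smul, e2, e3, diffusion_herm ρ L h1, star_trace_c ρ L h1]
  rw [show star (2⁻¹ : ℂ) = (2⁻¹ : ℂ) by norm_num]
  rw [sub_right_comm]

end Herm

/-- At a pure state `ρ`, the Stratonovich drift `A(ρ)` of eq. (4.2) is Hermitian and
tangent to the manifold of pure states (`ρA + Aρ = A`); in particular its trace is zero. -/
theorem driftField_tangent {n m : ℕ} (ρ : Matrix (Fin n) (Fin n) ℂ)
    (h1 : ρᴴ = ρ) (h2 : ρ ^ 2 = ρ) (h3 : ρ.trace = 1)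
    (H : Matrix (Fin n) (Fin n) ℂ) (hH : Hᴴ = H)
    (L : Fin m → Matrix (Fin n) (Fin n) ℂ) :
    (driftField H L ρ)ᴴ = driftField H L ρ ∧
      ρ * driftField H L ρ + driftField H L ρ * ρ = driftField H L ρ ∧
      (driftField H L ρ).trace = 0 := by
  have hm : ρ * ρ = ρ := by rw [← pow_two]; exact h2
  have htang : Tang ρ (driftField H L ρ) := by
    unfold driftField
    apply tang_add
    · have h := tang_smul (-Complex.I) (tang_comm hm H)
      have e : H * ρ - ρ * H = (H * ρ - ρ * H) := rfl
      exact h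
    · apply tang_sum
      intro j
      apply tang_sub
      apply tang_sub
      · apply tang_smul
        unfold diffusionField
        have hB : (L j) * ρ + ρ * (L j)ᴴ - ((L j + (L j)ᴴ) * ρ).trace • ρ
            = ((L j) * ρ - ((L j) * ρ).trace • ρ) + (ρ * (L j)ᴴ - ((L j)ᴴ * ρ).trace • ρ) := by
          rw [Matrix.add_mul, trace_add, add_smul]
          abel
        rw [hB]
        exact tang_add (tang_left hm h1 h3 (L j)) (tang_right hm h1 h3 (L j)ᴴ)
      · apply tang_smul
        have h := tang_left hm h1 h3 ((L j + (L j)ᴴ) * L j)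
        exact h
      · apply tang_smul
        have h := tang_right hm h1 h3 ((L j)ᴴ * (L j + (L j)ᴴ))
        have htr : ((L j)ᴴ * (L j + (L j)ᴴ) * ρ).trace
            = ((L j + (L j)ᴴ) * ρ * (L j)ᴴ).trace := by
          rw [trace_mul_cycle, trace_mul_cycle]
        rw [htr, ← Matrix.mul_assoc] at h
        exact h
  refine ⟨?_, htang, ?_⟩
  · -- Hermitian
    unfold driftField
    rw [conjTranspose_add, conjTranspose_smul, conjTranspose_sub, conjTranspose_mul,
      conjTranspose_mul, h1, hH]
    congr 1
    · rw [show star (-Complex.I) = Complex.I by simp, neg_smul, ← smul_neg, neg_sub]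
    · rw [conjTranspose_sum]
      exact Finset.sum_congr rfl fun j _ => summand_herm ρ (L j) h1
  · -- trace zero
    set T := driftField H L ρ with hT
    have h5 : ρ * T * ρ = 0 := by
      have h6 := congrArg (fun X => ρ * X) htang
      simp only [Matrix.mul_add, ← Matrix.mul_assoc, hm] at h6
      calc ρ * T * ρ = (ρ * T + ρ * T * ρ) - ρ * T := by abel
        _ = 0 := by rw [h6]; abel
    have h7 : (T * ρ).trace • ρ = 0 := by rw [← pure_key ρ h1 hm h3 T, h5]
    have h8 : (T * ρ).trace = 0 := by
      have h9 := congrArg Matrix.trace h7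
      rw [trace_smul, h3, smul_eq_mul, mul_one, trace_zero] at h9
      exact h9
    have h9 := congrArg Matrix.trace htang
    rw [trace_add, trace_mul_comm, h8, add_zero] at h9
    exact h9.symm
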